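/- For all BCCSP processes p1 and p2: p1 ⊑_PW p2 (i.e. PW(p1) ⊆ PW(p2)) if and only if dBGO_I(p1) ⊆ dBGO_I(p2). -/

import Mathlib

/-- BCCSP processes over a set `Act` of actions. -/
inductive Proc (Act : Type) : Type where
  | nil : Proc Act
  | pre : Act → Proc Act → Proc Act
  | choice : Proc Act → Proc Act → Proc Act

/-- The transition relation of BCCSP. -/
inductive Proc.Step {Act : Type} : Proc Act → Act → Proc Act → Prop where
  | pre (a : Act) (p : Proc Act) : Proc.Step (Proc.pre a p) a p
  | left {p p' : Proc Act} {a : Act} (q : Proc Act) :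
      Proc.Step p a p' → Proc.Step (Proc.choice p q) a p'
  | right (p : Proc Act) {q q' : Proc Act} {a : Act} :
      Proc.Step q a q' → Proc.Step (Proc.choice p q) a q'

/-- The initial offer of a process. -/
def Proc.initials {Act : Type} (p : Proc Act) : Set Act :=
  {a | ∃ p', Proc.Step p a p'}

/-- Multi-step transitions: `p ⇒α q`. -/
inductive Proc.Steps {Act : Type} : Proc Act → List Act → Proc Act → Prop where
  | refl (p : Proc Act) : Proc.Steps p [] p
  | cons {p p' p'' : Proc Act} {a : Act} {α : List Act} :
      Proc.Step p a p' → Proc.Steps p' α p'' → Proc.Steps p (a :: α) p''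

/-- Branching general observations: finite trees with nodes labeled in `Λ`
and arcs labeled by actions in `Act`. -/
inductive Obs (Act Λ : Type) : Type where
  | node : Λ → List (Act × Obs Act Λ) → Obs Act Λ

/-- Membership `b ∈ BGO_L(p)`:
`BGO_L(p) = {⟨L(p), S⟩ | S ⊆ {(a, b) | p →a p', b ∈ BGO_L(p')}}`. -/
def InBGO {Act Λ : Type} (L : Proc Act → Λ) : Obs Act Λ → Proc Act → Prop
  | Obs.node l S, p =>
      l = L p ∧ ∀ a b, (a, b) ∈ S → ∃ p', Proc.Step p a p' ∧ InBGO L b p'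
termination_by b _ => sizeOf b
decreasing_by
  have h1 : sizeOf (a, b) < sizeOf S := List.sizeOf_lt_of_mem (by assumption)
  simp at h1 ⊢
  omega

/-- A process is deterministic if at every reachable state, the `a`-derivative
is unique (for each action `a`). -/
def Deterministic {Act : Type} (p : Proc Act) : Prop :=
  ∀ (α : List Act) (r : Proc Act), Proc.Steps p α r →
    ∀ (a : Act) (r₁ r₂ : Proc Act), Proc.Step r a r₁ → Proc.Step r a r₂ → r₁ = r₂

/-- `S` is a ready simulation. -/
def IsReadySim {Act : Type} (S : Proc Act → Proc Act → Prop) : Prop :=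
  ∀ p q, S p q → Proc.initials p = Proc.initials q ∧
    ∀ a p', Proc.Step p a p' → ∃ q', Proc.Step q a q' ∧ S p' q'

/-- The ready simulation preorder `p ⊑_RS q`. -/
def RSle {Act : Type} (p q : Proc Act) : Prop :=
  ∃ S, IsReadySim S ∧ S p q

/-- The set of possible worlds of `p`. -/
def PW {Act : Type} (p : Proc Act) : Set (Proc Act) :=
  {q | Deterministic q ∧ RSle q p}

/-- A branching observation is deterministic if at every node no two
outgoing arcs carry the same action. -/
def DetObs {Act Λ : Type} : Obs Act Λ → Prop
  | Obs.node _ S =>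
      (∀ x ∈ S, ∀ y ∈ S, x.1 = y.1 → x.2 = y.2) ∧
      ∀ a b, (a, b) ∈ S → DetObs b
termination_by b => sizeOf b
decreasing_by
  have h1 : sizeOf (a, b) < sizeOf S := List.sizeOf_lt_of_mem (by assumption)
  simp at h1 ⊢
  omega

section Aux
variable {Act : Type}

/-- Syntactic menu of a process: all its initial transitions. -/
def Proc.menu : Proc Act → List (Act × Proc Act)
  | Proc.nil => []
  | Proc.pre a p => [(a, p)]
  | Proc.choice p q => p.menu ++ q.menu

theorem Proc.step_iff_menu {p p' : Proc Act} {a : Act} :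
    Proc.Step p a p' ↔ (a, p') ∈ p.menu := by
  constructor
  · intro h
    induction h with
    | pre a p => simp [Proc.menu]
    | left q h ih => simp [Proc.menu]; exact Or.inl ih
    | right p h ih => simp [Proc.menu]; exact Or.inr ih
  · intro h
    induction p with
    | nil => simp [Proc.menu] at h
    | pre b q => simp [Proc.menu] at h; obtain ⟨rfl, rfl⟩ := h; exact .pre ..
    | choice q r ihq ihr =>
        simp only [Proc.menu, List.mem_append] at h
        rcases h with h | h
        · exact .left _ (ihq h)
        · exact .right _ (ihr h)

theorem Proc.sizeOf_step {p p' : Proc Act} {a : Act} (h : Proc.Step p a p') :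
    sizeOf p' < sizeOf p := by
  induction h with
  | pre a p => simp
  | left q h ih => simp; omega
  | right p h ih => simp; omega

def sumList : List (Act × Proc Act) → Proc Act
  | [] => Proc.nil
  | (a, q) :: L => Proc.choice (Proc.pre a q) (sumList L)

theorem step_sumList {L : List (Act × Proc Act)} {a : Act} {q : Proc Act} :
    Proc.Step (sumList L) a q ↔ (a, q) ∈ L := by
  rw [Proc.step_iff_menu]
  induction L with
  | nil => simp [sumList, Proc.menu]
  | cons x L ih => obtain ⟨b, r⟩ := x; simp [sumList, Proc.menu] at ih ⊢; rw [ih]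

theorem initials_sumList {L : List (Act × Proc Act)} {a : Act} :
    a ∈ Proc.initials (sumList L) ↔ ∃ q, (a, q) ∈ L := by
  simp [Proc.initials, step_sumList, Set.mem_setOf_eq]

theorem det_step {p p' : Proc Act} {a : Act} (hp : Deterministic p)
    (h : Proc.Step p a p') : Deterministic p' :=
  fun α r hs => hp (a :: α) r (.cons h hs)

theorem det_sumList {L : List (Act × Proc Act)}
    (h1 : ∀ x ∈ L, ∀ y ∈ L, x.1 = y.1 → x.2 = y.2)
    (h2 : ∀ x ∈ L, Deterministic x.2) : Deterministic (sumList L) := by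
  intro α r hs
  cases hs with
  | refl =>
      intro a r₁ r₂ hs₁ hs₂
      exact h1 (a, r₁) (step_sumList.mp hs₁) (a, r₂) (step_sumList.mp hs₂) rfl
  | cons h hs => exact h2 _ (step_sumList.mp h) _ _ hs

theorem rsle_ready : IsReadySim (@RSle Act) := by
  intro p q hpq
  obtain ⟨S, hS, hpqS⟩ := hpq
  obtain ⟨hinit, hstep⟩ := hS p q hpqS
  refine ⟨hinit, fun a p' h => ?_⟩
  obtain ⟨q', hq', hS'⟩ := hstep a p' h
  exact ⟨q', hq', S, hS, hS'⟩

theorem bgo_mono : ∀ (n : ℕ) (b : Obs Act (Set Act)), sizeOf b ≤ n →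
    ∀ {q p : Proc Act}, RSle q p → InBGO Proc.initials b q →
      InBGO Proc.initials b p := by
  intro n
  induction n with
  | zero => rintro ⟨l, T⟩ hb; simp at hb
  | succ n ih =>
      rintro ⟨l, T⟩ hb q p hqp h
      simp only [InBGO] at h ⊢
      obtain ⟨hl, harc⟩ := h
      obtain ⟨hinit, hstep⟩ := rsle_ready q p hqp
      refine ⟨hl.trans hinit, fun a b' hmem => ?_⟩
      obtain ⟨q', hq', hb'⟩ := harc a b' hmem
      obtain ⟨p', hp', hqp'⟩ := hstep a q' hq'
      have hsz : sizeOf (a, b') < sizeOf T := List.sizeOf_lt_of_mem hmem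
      have : sizeOf b' ≤ n := by simp at hsz hb ⊢; omega
      exact ⟨p', hp', ih b' this hqp' hb'⟩

open Classical in
noncomputable def dk : List (Act × Proc Act) → List (Act × Proc Act)
  | [] => []
  | x :: l => if ∃ y ∈ l, y.1 = x.1 then dk l else x :: dk l

theorem dk_subset : ∀ {l : List (Act × Proc Act)} {x}, x ∈ dk l → x ∈ l := by
  intro l
  induction l with
  | nil => simp [dk]
  | cons y l ih =>
      intro x hx
      simp only [dk] at hx
      split at hx
      · exact List.mem_cons_of_mem _ (ih hx)
      · rcases List.mem_cons.mp hx with rfl | hx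
        · exact List.mem_cons_self
        · exact List.mem_cons_of_mem _ (ih hx)

theorem dk_keys : ∀ {l : List (Act × Proc Act)} {a : Act},
    (∃ x, (a, x) ∈ l) ↔ ∃ x, (a, x) ∈ dk l := by
  intro l
  induction l with
  | nil => simp [dk]
  | cons y l ih =>
      intro a
      obtain ⟨c, yp⟩ := y
      simp only [dk]
      split
      · rename_i hex
        constructor
        · rintro ⟨x, hx⟩
          rcases List.mem_cons.mp hx with hh | hx
          · obtain ⟨rfl, rfl⟩ := Prod.mk.injEq .. ▸ hh
            obtain ⟨z, hz, hz1⟩ := hex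
            refine ih.mp ⟨z.2, ?_⟩
            have hze : z = (a, z.2) := by
              cases z; simp only at hz1; simp [hz1]
            exact hze ▸ hz
          · exact ih.mp ⟨x, hx⟩
        · rintro ⟨x, hx⟩
          exact ⟨x, List.mem_cons_of_mem _ (dk_subset hx)⟩
      · constructor
        · rintro ⟨x, hx⟩
          rcases List.mem_cons.mp hx with hh | hx
          · exact ⟨x, hh ▸ List.mem_cons_self⟩
          · obtain ⟨z, hz⟩ := ih.mp ⟨x, hx⟩
            exact ⟨z, List.mem_cons_of_mem _ hz⟩
        · rintro ⟨x, hx⟩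
          rcases List.mem_cons.mp hx with hh | hx
          · exact ⟨x, hh ▸ List.mem_cons_self⟩
          · obtain ⟨z, hz⟩ := ih.mpr ⟨x, hx⟩
            exact ⟨z, List.mem_cons_of_mem _ hz⟩

theorem dk_inj : ∀ {l : List (Act × Proc Act)},
    ∀ x ∈ dk l, ∀ y ∈ dk l, x.1 = y.1 → x = y := by
  intro l
  induction l with
  | nil => simp [dk]
  | cons z l ih =>
      intro x hx y hy hxy
      by_cases hex : ∃ w ∈ l, w.1 = z.1
      · rw [dk, if_pos hex] at hx hy
        exact ih x hx y hy hxy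
      · rw [dk, if_neg hex] at hx hy
        rcases List.mem_cons.mp hx with hx1 | hx2
        · rcases List.mem_cons.mp hy with hy1 | hy2
          · rw [hx1, hy1]
          · refine absurd ⟨y, dk_subset hy2, ?_⟩ hex
            rw [← hx1]; exact hxy.symm
        · rcases List.mem_cons.mp hy with hy1 | hy2
          · refine absurd ⟨x, dk_subset hx2, ?_⟩ hex
            rw [← hy1]; exact hxy
          · exact ih x hx2 y hy2 hxy

def arcsOf : Obs Act (Set Act) → List (Act × Obs Act (Set Act))
  | Obs.node _ S => S

def cobs : Proc Act → Obs Act (Set Act)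
  | Proc.nil => .node (Proc.initials Proc.nil) []
  | Proc.pre a p => .node (Proc.initials (Proc.pre a p)) [(a, cobs p)]
  | Proc.choice p q =>
      .node (Proc.initials (Proc.choice p q)) (arcsOf (cobs p) ++ arcsOf (cobs q))

theorem cobs_eq : ∀ p : Proc Act,
    cobs p = .node (Proc.initials p) ((Proc.menu p).map fun x => (x.1, cobs x.2)) := by
  intro p
  induction p with
  | nil => simp [cobs, Proc.menu]
  | pre a p ih => simp [cobs, Proc.menu]
  | choice p q ihp ihq =>
      simp only [cobs, Proc.menu, List.map_append]
      rw [ihp, ihq]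
      simp [arcsOf]

theorem cobs_in : ∀ (n : ℕ) (p : Proc Act), sizeOf p ≤ n →
    InBGO Proc.initials (cobs p) p := by
  intro n
  induction n with
  | zero => intro p hp; cases p <;> simp at hp
  | succ n ih =>
      intro p hp
      rw [cobs_eq]
      simp only [InBGO]
      refine ⟨by trivial, fun a b hmem => ?_⟩
      simp only [List.mem_map] at hmem
      obtain ⟨x, hx, hxe⟩ := hmem
      obtain ⟨rfl, rfl⟩ := Prod.mk.injEq .. ▸ hxe
      have hstep : Proc.Step p x.1 x.2 := Proc.step_iff_menu.mpr (by cases x; exact hx)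
      exact ⟨x.2, hstep, ih x.2 (by have := Proc.sizeOf_step hstep; omega)⟩

theorem cobs_det : ∀ (n : ℕ) (p : Proc Act), sizeOf p ≤ n → Deterministic p →
    DetObs (cobs p) := by
  intro n
  induction n with
  | zero => intro p hp; cases p <;> simp at hp
  | succ n ih =>
      intro p hp hdet
      rw [cobs_eq]
      simp only [DetObs]
      constructor
      · intro x hx y hy hxy
        simp only [List.mem_map] at hx hy
        obtain ⟨u, hu, rfl⟩ := hx
        obtain ⟨v, hv, rfl⟩ := hy
        simp only at hxy ⊢
        have hsu : Proc.Step p u.1 u.2 := Proc.step_iff_menu.mpr (by cases u; exact hu)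
        have hsv : Proc.Step p v.1 v.2 := Proc.step_iff_menu.mpr (by cases v; exact hv)
        rw [← hxy] at hsv
        rw [hdet [] p (.refl p) u.1 u.2 v.2 hsu hsv]
      · intro a b hmem
        simp only [List.mem_map] at hmem
        obtain ⟨x, hx, hxe⟩ := hmem
        obtain ⟨rfl, rfl⟩ := Prod.mk.injEq .. ▸ hxe
        have hstep : Proc.Step p x.1 x.2 := Proc.step_iff_menu.mpr (by cases x; exact hx)
        exact ih x.2 (by have := Proc.sizeOf_step hstep; omega) (det_step hdet hstep)

theorem sim_cobs : IsReadySim (fun r s : Proc Act =>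
    Deterministic r ∧ InBGO Proc.initials (cobs r) s) := by
  rintro r s ⟨hr, h⟩
  rw [cobs_eq] at h
  simp only [InBGO] at h
  obtain ⟨hl, harc⟩ := h
  refine ⟨hl, fun a r' hstep => ?_⟩
  have hmem : (a, cobs r') ∈ (Proc.menu r).map fun x => (x.1, cobs x.2) :=
    List.mem_map.mpr ⟨(a, r'), Proc.step_iff_menu.mp hstep, rfl⟩
  obtain ⟨s', hs', hin⟩ := harc a (cobs r') hmem
  exact ⟨s', hs', det_step hr hstep, hin⟩

theorem lemE : ∀ (n : ℕ) (p : Proc Act), sizeOf p ≤ n →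
    ∀ b, InBGO Proc.initials b p → DetObs b →
      ∃ q, Deterministic q ∧ RSle q p ∧ InBGO Proc.initials b q := by
  intro n
  induction n with
  | zero => intro p hp; cases p <;> simp at hp
  | succ n ih =>
      rintro p hp ⟨l, T⟩ hb hd
      simp only [InBGO] at hb
      simp only [DetObs] at hd
      obtain ⟨hl, harc⟩ := hb
      obtain ⟨hd1, hd2⟩ := hd
      set M := dk (Proc.menu p) with hMdef
      have hM1 : ∀ x ∈ M, Proc.Step p x.1 x.2 := fun x hx =>
        Proc.step_iff_menu.mpr (by cases x; exact dk_subset hx)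
      have hMinj : ∀ x ∈ M, ∀ y ∈ M, x.1 = y.1 → x = y := fun x hx y hy => dk_inj x hx y hy
      have hx : ∀ x ∈ M, ∃ q, Deterministic q ∧
          (∃ p', Proc.Step p x.1 p' ∧ RSle q p') ∧
          ∀ b', (x.1, b') ∈ T → InBGO Proc.initials b' q := by
        intro x hxM
        by_cases hc : ∃ b', (x.1, b') ∈ T
        · obtain ⟨b', hb'⟩ := hc
          obtain ⟨p', hp', hin⟩ := harc x.1 b' hb'
          have hps : sizeOf p' ≤ n := by have := Proc.sizeOf_step hp'; omega
          obtain ⟨q, hq1, hq2, hq3⟩ := ih p' hps b' hin (hd2 _ _ hb')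
          refine ⟨q, hq1, ⟨p', hp', hq2⟩, fun b'' hb'' => ?_⟩
          have : b'' = b' := hd1 (x.1, b'') hb'' (x.1, b') hb' rfl
          exact this ▸ hq3
        · have hps : sizeOf x.2 ≤ n := by have := Proc.sizeOf_step (hM1 x hxM); omega
          obtain ⟨q, hq1, hq2, -⟩ := ih x.2 hps (Obs.node (Proc.initials x.2) [])
            (by simp only [InBGO]; exact ⟨by trivial, by simp⟩)
            (by simp only [DetObs]; simp)
          exact ⟨q, hq1, ⟨x.2, hM1 x hxM, hq2⟩, fun b' hb' => absurd ⟨b', hb'⟩ hc⟩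
      choose f hf using hx
      set L := M.attach.map (fun x => (x.1.1, f x.1 x.2)) with hLdef
      have hmemL : ∀ {z : Act × Proc Act}, z ∈ L ↔
          ∃ x : {x // x ∈ M}, (x.1.1, f x.1 x.2) = z := by
        intro z; simp [hLdef, List.mem_map]
      have hkeyL : ∀ a : Act, (∃ r, (a, r) ∈ L) ↔ ∃ p', Proc.Step p a p' := by
        intro a
        constructor
        · rintro ⟨r, hr⟩
          obtain ⟨x, hxe⟩ := hmemL.mp hr
          obtain ⟨h1, -⟩ := Prod.mk.injEq .. ▸ hxe
          obtain ⟨p', hp', -⟩ := (hf x.1 x.2).2.1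
          exact ⟨p', h1 ▸ hp'⟩
        · rintro ⟨p', hp'⟩
          have : ∃ x2, (a, x2) ∈ M := dk_keys.mp ⟨p', Proc.step_iff_menu.mp hp'⟩
          obtain ⟨x2, hx2⟩ := this
          exact ⟨f (a, x2) hx2, hmemL.mpr ⟨⟨(a, x2), hx2⟩, rfl⟩⟩
      have hinitq : Proc.initials (sumList L) = Proc.initials p := by
        ext a
        rw [initials_sumList, hkeyL]
        rfl
      have hdetq : Deterministic (sumList L) := by
        apply det_sumList
        · intro x hxL y hyL hxy
          obtain ⟨u, hue⟩ := hmemL.mp hxL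
          obtain ⟨v, hve⟩ := hmemL.mp hyL
          subst hue; subst hve
          simp only at hxy ⊢
          have : u.1 = v.1 := hMinj u.1 u.2 v.1 v.2 hxy
          cases u; cases v
          simp only at this
          subst this
          rfl
        · intro x hxL
          obtain ⟨u, hue⟩ := hmemL.mp hxL
          subst hue
          exact (hf u.1 u.2).1
      have hrsle : RSle (sumList L) p := by
        refine ⟨fun r s => RSle r s ∨ (r = sumList L ∧ s = p), ?_, Or.inr ⟨rfl, rfl⟩⟩
        rintro r s (hrs | ⟨rfl, rfl⟩)
        · obtain ⟨h1, h2⟩ := rsle_ready r s hrs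
          exact ⟨h1, fun a r' h => by
            obtain ⟨s', hs', hr's'⟩ := h2 a r' h
            exact ⟨s', hs', Or.inl hr's'⟩⟩
        · refine ⟨hinitq, fun a r' h => ?_⟩
          obtain ⟨u, hue⟩ := hmemL.mp (step_sumList.mp h)
          obtain ⟨h1, h2⟩ := Prod.mk.injEq .. ▸ hue
          obtain ⟨p', hp', hrsle'⟩ := (hf u.1 u.2).2.1
          exact ⟨p', h1 ▸ hp', Or.inl (h2 ▸ hrsle')⟩
      refine ⟨sumList L, hdetq, hrsle, ?_⟩
      simp only [InBGO]
      refine ⟨hl.trans hinitq.symm, fun a b' hmem => ?_⟩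
      obtain ⟨p', hp', -⟩ := harc a b' hmem
      have : ∃ x2, (a, x2) ∈ M := dk_keys.mp ⟨p', Proc.step_iff_menu.mp hp'⟩
      obtain ⟨x2, hx2⟩ := this
      refine ⟨f (a, x2) hx2, step_sumList.mpr (hmemL.mpr ⟨⟨(a, x2), hx2⟩, rfl⟩), ?_⟩
      exact (hf (a, x2) hx2).2.2 b' hmem

end Aux

/-- `p₁ ⊑_PW p₂` (i.e. `PW(p₁) ⊆ PW(p₂)`) iff
`dBGO_I(p₁) ⊆ dBGO_I(p₂)`. -/
theorem stmt11 {Act : Type} (p₁ p₂ : Proc Act) :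
    PW p₁ ⊆ PW p₂ ↔
      {b | InBGO Proc.initials b p₁ ∧ DetObs b} ⊆
        {b | InBGO Proc.initials b p₂ ∧ DetObs b} := by
  constructor
  · rintro hpw b ⟨hin, hdet⟩
    obtain ⟨q, hq1, hq2, hq3⟩ := lemE (sizeOf p₁) p₁ le_rfl b hin hdet
    have hq' : q ∈ PW p₂ := hpw ⟨hq1, hq2⟩
    exact ⟨bgo_mono (sizeOf b) b le_rfl hq'.2 hq3, hdet⟩
  · rintro hbgo q ⟨hqdet, hqle⟩
    have h1 : InBGO Proc.initials (cobs q) q := cobs_in (sizeOf q) q le_rfl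
    have h2 : DetObs (cobs q) := cobs_det (sizeOf q) q le_rfl hqdet
    have h3 : InBGO Proc.initials (cobs q) p₁ :=
      bgo_mono (sizeOf (cobs q)) (cobs q) le_rfl hqle h1
    have h4 := hbgo ⟨h3, h2⟩
    exact ⟨hqdet, fun r s => Deterministic r ∧ InBGO Proc.initials (cobs r) s,
      sim_cobs, hqdet, h4.1⟩
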